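/- The arithmetic distance d(A,B) = rank(A − B) restricted to the set of self-adjoint (Hermitian) complex n×n matrices is geodesic: if A, B are Hermitian with rank(A − B) = k ≥ 2, there exists a Hermitian matrix C with rank(A − C) = 1 and rank(C − B) = k − 1. -/

import Mathlib

open Matrix

lemma conj_rank {n : ℕ} (U : Matrix.unitaryGroup (Fin n) ℂ)
    (X : Matrix (Fin n) (Fin n) ℂ) :
    ((U : Matrix (Fin n) (Fin n) ℂ) * X * star (U : Matrix (Fin n) (Fin n) ℂ)).rank
      = X.rank := by
  have hU : IsUnit (U : Matrix (Fin n) (Fin n) ℂ).det :=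
    ((Matrix.isUnit_iff_isUnit_det _).mp ⟨Unitary.toUnits U, rfl⟩)
  have hUs : IsUnit (star (U : Matrix (Fin n) (Fin n) ℂ)).det :=
    ((Matrix.isUnit_iff_isUnit_det _).mp (by
      rw [← Unitary.coe_star]; exact ⟨Unitary.toUnits (star U), rfl⟩))
  rw [Matrix.rank_mul_eq_left_of_isUnit_det _ _ hUs,
    Matrix.rank_mul_eq_right_of_isUnit_det _ _ hU]

/-- Arithmetic distance is geodesic on Hermitian complex matrices. -/
theorem stmt_2 {n : ℕ} (A B : Matrix (Fin n) (Fin n) ℂ)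
    (hA : A.IsHermitian) (hB : B.IsHermitian) (k : ℕ)
    (hk : (A - B).rank = k) (h2 : 2 ≤ k) :
    ∃ C : Matrix (Fin n) (Fin n) ℂ, C.IsHermitian ∧
      (A - C).rank = 1 ∧ (C - B).rank = k - 1 := by
  set M := A - B with hM
  have hMh : M.IsHermitian := hA.sub hB
  set μ := hMh.eigenvalues with hμ
  set U := hMh.eigenvectorUnitary with hU
  have hspec : M = (U : Matrix (Fin n) (Fin n) ℂ) *
      Matrix.diagonal (RCLike.ofReal ∘ μ) * star (U : Matrix (Fin n) (Fin n) ℂ) :=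
    hMh.spectral_theorem
  have hcard : Fintype.card {i // μ i ≠ 0} = k := by
    rw [← hMh.rank_eq_card_non_zero_eigs, hk]
  have hne : ∃ i0, μ i0 ≠ 0 := by
    by_contra h
    push_neg at h
    have : Fintype.card {i // μ i ≠ 0} = 0 := by simp [h]
    omega
  obtain ⟨i0, hi0⟩ := hne
  set w : Fin n → ℝ := fun i => if i = i0 then μ i0 else 0 with hw
  set R1 : Matrix (Fin n) (Fin n) ℂ :=
    (U : Matrix (Fin n) (Fin n) ℂ) * Matrix.diagonal (RCLike.ofReal ∘ w) *
      star (U : Matrix (Fin n) (Fin n) ℂ) with hR1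
  refine ⟨A - R1, ?_, ?_, ?_⟩
  · apply hA.sub
    rw [hR1, Matrix.star_eq_conjTranspose]
    apply Matrix.isHermitian_mul_mul_conjTranspose
    apply Matrix.isHermitian_diagonal_iff.mpr
    intro i
    simp only [Function.comp_apply]
    exact (Complex.conj_ofReal _)
  · rw [sub_sub_cancel, hR1, conj_rank, Matrix.rank_diagonal]
    have hiff : ∀ i : Fin n, ((RCLike.ofReal ∘ w : Fin n → ℂ) i ≠ 0) ↔ i = i0 := by
      intro i
      simp only [Function.comp_apply, RCLike.ofReal_ne_zero, hw]
      constructor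
      · intro h; by_contra hne; simp [hne] at h
      · intro h; subst h; simpa using hi0
    rw [Fintype.card_congr (Equiv.subtypeEquivRight hiff), Fintype.card_subtype_eq]
  · rw [sub_right_comm, ← hM, hspec, hR1, ← Matrix.sub_mul, ← Matrix.mul_sub]
    have hd : Matrix.diagonal (RCLike.ofReal ∘ μ : Fin n → ℂ) - Matrix.diagonal (RCLike.ofReal ∘ w : Fin n → ℂ) =
        Matrix.diagonal (RCLike.ofReal ∘ (μ - w) : Fin n → ℂ) := by
      rw [Matrix.diagonal_sub]
      refine congrArg Matrix.diagonal (funext fun i => ?_)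
      simp
    rw [hd, conj_rank, Matrix.rank_diagonal]
    have hiff : ∀ i : Fin n, ((RCLike.ofReal ∘ (μ - w) : Fin n → ℂ) i ≠ 0) ↔ (μ - w) i ≠ 0 := by
      intro i
      simp only [Function.comp_apply]
      exact RCLike.ofReal_ne_zero
    rw [Fintype.card_congr (Equiv.subtypeEquivRight hiff), Fintype.card_subtype]
    have key : (Finset.univ.filter fun i => (μ - w) i ≠ 0) =
        (Finset.univ.filter fun i => μ i ≠ 0).erase i0 := by
      ext i
      simp only [Finset.mem_filter, Finset.mem_erase, Finset.mem_univ, true_and,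
        Pi.sub_apply, hw]
      constructor
      · intro h
        by_cases hii : i = i0
        · exfalso; subst hii; simp at h
        · exact ⟨hii, fun h0 => h (by simp [hii, h0])⟩
      · rintro ⟨hii, h0⟩
        simpa [hii] using h0
    rw [key, Finset.card_erase_of_mem (by simp [hi0]), ← Fintype.card_subtype, hcard]
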